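/- Let A, B, C be finite-dimensional real vector spaces, D = A × B × C, and X(D) the space of double-linear functions on D. Then every double-linear σ restricts on the core {(0,0,c) : c ∈ C} to a linear functional j(σ) ∈ C*, and the resulting map j : X(D) → C* is a surjective linear map whose kernel equals the image of the injection i : A*⊗B* → X(D) given by i(θ)(a,b,c) = θ(a⊗b); in particular 0 → A*⊗B* →i X(D) →j C* → 0 is exact. -/

import Mathlib

open Function Module

open Function Module

/-- A function on `A × B × C` is double-linear if it is linear in `(b, c)` for
each fixed `a`, and linear in `(a, c)` for each fixed `b`. -/
def IsDoubleLinear (A B C : Type*) [AddCommGroup A] [Module ℝ A]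
    [AddCommGroup B] [Module ℝ B] [AddCommGroup C] [Module ℝ C]
    (σ : A × B × C → ℝ) : Prop :=
  (∀ (a : A) (b₁ b₂ : B) (c₁ c₂ : C) (r : ℝ),
      σ (a, r • b₁ + b₂, r • c₁ + c₂) = r * σ (a, b₁, c₁) + σ (a, b₂, c₂)) ∧
  (∀ (a₁ a₂ : A) (b : B) (c₁ c₂ : C) (r : ℝ),
      σ (r • a₁ + a₂, b, r • c₁ + c₂) = r * σ (a₁, b, c₁) + σ (a₂, b, c₂))

/-- The space `X(D)` of double-linear functions on `D = A × B × C`. -/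
def XD (A B C : Type*) [AddCommGroup A] [Module ℝ A]
    [AddCommGroup B] [Module ℝ B] [AddCommGroup C] [Module ℝ C] :
    Submodule ℝ ((A × B × C) → ℝ) where
  carrier := {σ | IsDoubleLinear A B C σ}
  add_mem' := by
    rintro σ τ ⟨h1, h2⟩ ⟨g1, g2⟩
    refine ⟨fun a b₁ b₂ c₁ c₂ r => ?_, fun a₁ a₂ b c₁ c₂ r => ?_⟩
    · simp only [Pi.add_apply, h1 a b₁ b₂ c₁ c₂ r, g1 a b₁ b₂ c₁ c₂ r]; ring
    · simp only [Pi.add_apply, h2 a₁ a₂ b c₁ c₂ r, g2 a₁ a₂ b c₁ c₂ r]; ring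
  zero_mem' :=
    ⟨fun _ _ _ _ _ _ => by simp, fun _ _ _ _ _ _ => by simp⟩
  smul_mem' := by
    rintro t σ ⟨h1, h2⟩
    refine ⟨fun a b₁ b₂ c₁ c₂ r => ?_, fun a₁ a₂ b c₁ c₂ r => ?_⟩
    · simp only [Pi.smul_apply, smul_eq_mul, h1 a b₁ b₂ c₁ c₂ r]; ring
    · simp only [Pi.smul_apply, smul_eq_mul, h2 a₁ a₂ b c₁ c₂ r]; ring



section StmtAux
variable {A B C : Type*} [AddCommGroup A] [Module ℝ A]
    [AddCommGroup B] [Module ℝ B] [AddCommGroup C] [Module ℝ C]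

lemma XD.zero_left (σ : XD A B C) (a : A) : (σ : (A × B × C) → ℝ) (a, 0, 0) = 0 := by
  have h := σ.2.1 a 0 0 0 0 1
  simp only [smul_zero, add_zero, one_mul] at h
  linarith

lemma XD.split (σ : XD A B C) (a : A) (b : B) (c : C) :
    (σ : (A × B × C) → ℝ) (a, b, c)
      = (σ : (A × B × C) → ℝ) (a, b, 0) + (σ : (A × B × C) → ℝ) (0, 0, c) := by
  have h1 := σ.2.1 a b 0 0 c 1
  have h2 := σ.2.2 a 0 0 0 c 1
  simp only [one_smul, add_zero, zero_add, smul_zero, one_mul] at h1 h2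
  rw [h1, h2, XD.zero_left]
  ring

/-- `j`: restriction to the core. -/
noncomputable def jmapAux (A B C : Type*) [AddCommGroup A] [Module ℝ A]
    [AddCommGroup B] [Module ℝ B] [AddCommGroup C] [Module ℝ C] :
    XD A B C →ₗ[ℝ] (C →ₗ[ℝ] ℝ) where
  toFun σ :=
    { toFun := fun c => (σ : (A × B × C) → ℝ) (0, 0, c)
      map_add' := fun c₁ c₂ => by
        have h := σ.2.1 0 0 0 c₁ c₂ 1
        simpa using h
      map_smul' := fun r c => by
        have h := σ.2.1 0 0 0 c 0 r
        have h0 : (σ : (A × B × C) → ℝ) (0, 0, 0) = 0 := XD.zero_left σ 0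
        simp only [smul_zero, add_zero] at h
        simpa [h0] using h }
  map_add' σ τ := by ext c; rfl
  map_smul' r σ := by ext c; rfl

/-- the bilinear map underlying `i`. -/
noncomputable def ifunAux (A B C : Type*) [AddCommGroup A] [Module ℝ A]
    [AddCommGroup B] [Module ℝ B] [AddCommGroup C] [Module ℝ C] :
    (A →ₗ[ℝ] ℝ) →ₗ[ℝ] (B →ₗ[ℝ] ℝ) →ₗ[ℝ] XD A B C :=
  LinearMap.mk₂ ℝ
    (fun α β => ⟨fun p => α p.1 * β p.2.1, by
      constructor
      · intro a b₁ b₂ c₁ c₂ r; simp only [map_add, map_smul, smul_eq_mul]; ring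
      · intro a₁ a₂ b c₁ c₂ r; simp only [map_add, map_smul, smul_eq_mul]; ring⟩)
    (by intro α α' β; apply Subtype.ext; funext p
        simp only [LinearMap.add_apply, Submodule.coe_add, Pi.add_apply]; ring)
    (by intro r α β; apply Subtype.ext; funext p
        simp only [LinearMap.smul_apply, SetLike.val_smul, Pi.smul_apply, smul_eq_mul]; ring)
    (by intro α β β'; apply Subtype.ext; funext p
        simp only [LinearMap.add_apply, Submodule.coe_add, Pi.add_apply]; ring)
    (by intro r α β; apply Subtype.ext; funext p
        simp only [LinearMap.smul_apply, SetLike.val_smul, Pi.smul_apply, smul_eq_mul]; ring)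

noncomputable def imapAux (A B C : Type*) [AddCommGroup A] [Module ℝ A]
    [AddCommGroup B] [Module ℝ B] [AddCommGroup C] [Module ℝ C] :
    TensorProduct ℝ (A →ₗ[ℝ] ℝ) (B →ₗ[ℝ] ℝ) →ₗ[ℝ] XD A B C :=
  TensorProduct.lift (ifunAux A B C)

@[simp] lemma imapAux_tmul (α : A →ₗ[ℝ] ℝ) (β : B →ₗ[ℝ] ℝ) (a : A) (b : B) (c : C) :
    ((imapAux A B C (α ⊗ₜ[ℝ] β)) : (A × B × C) → ℝ) (a, b, c) = α a * β b := rfl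

/-- restriction to the `(a,b)`-part, as a bilinear form. -/
noncomputable def resAux (A B C : Type*) [AddCommGroup A] [Module ℝ A]
    [AddCommGroup B] [Module ℝ B] [AddCommGroup C] [Module ℝ C] :
    XD A B C →ₗ[ℝ] (A →ₗ[ℝ] B →ₗ[ℝ] ℝ) where
  toFun σ :=
    { toFun := fun a =>
        { toFun := fun b => (σ : (A × B × C) → ℝ) (a, b, 0)
          map_add' := fun b₁ b₂ => by
            have h := σ.2.1 a b₁ b₂ (0 : C) 0 1
            simpa using h
          map_smul' := fun r b => by
            have h := σ.2.1 a b 0 (0 : C) 0 r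
            have h0 : (σ : (A × B × C) → ℝ) (a, 0, 0) = 0 := XD.zero_left σ a
            simp only [smul_zero, add_zero] at h
            simpa [h0] using h }
      map_add' := fun a₁ a₂ => by
        ext b
        have h := σ.2.2 a₁ a₂ b (0 : C) 0 1
        simpa using h
      map_smul' := fun r a => by
        ext b
        have h := σ.2.2 a 0 b (0 : C) 0 r
        have h0 : (σ : (A × B × C) → ℝ) (0, b, 0) = 0 := by
          have hh := σ.2.2 0 0 b (0 : C) 0 1
          simp only [one_smul, add_zero, smul_zero, one_mul] at hh
          linarith
        simp only [smul_zero, add_zero] at h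
        simpa [h0] using h }
  map_add' σ τ := by ext a b; rfl
  map_smul' r σ := by ext a b; rfl

end StmtAux
section StmtAux2
variable (A B C : Type*)
    [AddCommGroup A] [Module ℝ A] [FiniteDimensional ℝ A]
    [AddCommGroup B] [Module ℝ B] [FiniteDimensional ℝ B]
    [AddCommGroup C] [Module ℝ C] [FiniteDimensional ℝ C]

/-- `A* ⊗ B* ≃ Bilin(A,B;ℝ)` in finite dimensions. -/
noncomputable def EAux :
    TensorProduct ℝ (A →ₗ[ℝ] ℝ) (B →ₗ[ℝ] ℝ) ≃ₗ[ℝ] (A →ₗ[ℝ] B →ₗ[ℝ] ℝ) :=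
  (TensorProduct.dualDistribEquiv ℝ A B).trans (TensorProduct.lift.equiv (RingHom.id ℝ) A B ℝ).symm

omit [FiniteDimensional ℝ C] in
lemma res_comp_imap :
    (resAux A B C) ∘ₗ (imapAux A B C) = (EAux A B).toLinearMap := by
  apply TensorProduct.ext'
  intro α β
  ext a b
  simp [EAux, resAux, imapAux, ifunAux, TensorProduct.dualDistribEquiv,
    TensorProduct.dualDistribEquivOfBasis,     LinearEquiv.ofLinear_apply, TensorProduct.dualDistrib_apply,
    LinearMap.compr₂_apply, TensorProduct.mk_apply]


end StmtAux2
section StmtAux3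
variable (A B C : Type*)
    [AddCommGroup A] [Module ℝ A] [FiniteDimensional ℝ A]
    [AddCommGroup B] [Module ℝ B] [FiniteDimensional ℝ B]
    [AddCommGroup C] [Module ℝ C] [FiniteDimensional ℝ C]

omit [FiniteDimensional ℝ A] [FiniteDimensional ℝ B] [FiniteDimensional ℝ C] in
lemma jmap_comp_imap : (jmapAux A B C) ∘ₗ (imapAux A B C) = 0 := by
  apply TensorProduct.ext'
  intro α β
  ext c
  show α 0 * β 0 = 0
  simp

omit [FiniteDimensional ℝ C] in
lemma imap_apply (θ : TensorProduct ℝ (A →ₗ[ℝ] ℝ) (B →ₗ[ℝ] ℝ)) (a : A) (b : B) (c : C) :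
    ((imapAux A B C θ) : (A × B × C) → ℝ) (a, b, c) = EAux A B θ a b := by
  have h1 := XD.split (imapAux A B C θ) a b c
  have h2 : (jmapAux A B C) (imapAux A B C θ) = 0 := by
    rw [← LinearMap.comp_apply, jmap_comp_imap]; rfl
  have h3 : ((imapAux A B C θ) : (A × B × C) → ℝ) (0, 0, c) = 0 := by
    have := congrFun (congrArg (fun f : C →ₗ[ℝ] ℝ => (f : C → ℝ)) h2) c
    exact this
  have h4 : resAux A B C (imapAux A B C θ) = EAux A B θ := by
    rw [← LinearMap.comp_apply, res_comp_imap]; rfl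
  rw [h1, h3, add_zero, ← h4]
  rfl
end StmtAux3
theorem stmt5 (A B C : Type*)
    [AddCommGroup A] [Module ℝ A] [FiniteDimensional ℝ A]
    [AddCommGroup B] [Module ℝ B] [FiniteDimensional ℝ B]
    [AddCommGroup C] [Module ℝ C] [FiniteDimensional ℝ C] :
    ∃ jmap : XD A B C →ₗ[ℝ] (C →ₗ[ℝ] ℝ),
      (∀ (σ : XD A B C) (c : C), jmap σ c = (σ : (A × B × C) → ℝ) (0, 0, c)) ∧
      Surjective jmap ∧
      ∃ imap : TensorProduct ℝ (A →ₗ[ℝ] ℝ) (B →ₗ[ℝ] ℝ) →ₗ[ℝ] XD A B C,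
        (∀ (α : A →ₗ[ℝ] ℝ) (β : B →ₗ[ℝ] ℝ) (a : A) (b : B) (c : C),
          ((imap (α ⊗ₜ[ℝ] β)) : (A × B × C) → ℝ) (a, b, c) = α a * β b) ∧
        Injective imap ∧ LinearMap.range imap = LinearMap.ker jmap := by
  refine ⟨jmapAux A B C, fun σ c => rfl, ?_, imapAux A B C, fun α β a b c => rfl, ?_, ?_⟩
  · -- surjectivity of j
    intro γ
    refine ⟨⟨fun p => γ p.2.2, ?_, ?_⟩, by ext c; rfl⟩
    · intro a b₁ b₂ c₁ c₂ r; simp [map_add, map_smul]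
    · intro a₁ a₂ b c₁ c₂ r; simp [map_add, map_smul]
  · -- injectivity of i
    intro x y h
    apply (EAux A B).injective
    have hx : resAux A B C (imapAux A B C x) = EAux A B x := by
      rw [← LinearMap.comp_apply, res_comp_imap]; rfl
    have hy : resAux A B C (imapAux A B C y) = EAux A B y := by
      rw [← LinearMap.comp_apply, res_comp_imap]; rfl
    rw [← hx, ← hy, h]
  · -- exactness
    apply le_antisymm
    · rintro _ ⟨θ, rfl⟩
      rw [LinearMap.mem_ker, ← LinearMap.comp_apply, jmap_comp_imap]
      rfl
    · intro σ hσ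
      rw [LinearMap.mem_ker] at hσ
      refine ⟨(EAux A B).symm (resAux A B C σ), ?_⟩
      apply Subtype.ext
      funext p
      obtain ⟨a, b, c⟩ := p
      have h0 : (σ : (A × B × C) → ℝ) (0, 0, c) = 0 := by
        have := congrFun (congrArg (fun f : C →ₗ[ℝ] ℝ => (f : C → ℝ)) hσ) c
        exact this
      rw [imap_apply, LinearEquiv.apply_symm_apply]
      show (σ : (A × B × C) → ℝ) (a, b, 0) = (σ : (A × B × C) → ℝ) (a, b, c)
      rw [XD.split σ a b c, h0, add_zero]
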